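/- Let M = GΣGᵀ with Σ symmetric positive definite, Γ symmetric positive definite, λ > 0, and zλ = (M + λΓ)⁻¹y. If z ∈ ℝᵐ satisfies MΓ⁻¹(Mz − y) + λMz = 0 (i.e., z is a stationary point of J(z) = ‖Mz − y‖²_{Γ⁻¹} + λzᵀMz), then z − zλ ∈ 𝒩(M). Conversely, for any p ∈ 𝒩(M), zλ + p is also a stationary point. -/

import Mathlib

open Matrix

theorem stmt_4 {m n : ℕ} (G : Matrix (Fin m) (Fin n) ℝ)
    (S : Matrix (Fin n) (Fin n) ℝ) (hS : S.PosDef)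
    (Γ : Matrix (Fin m) (Fin m) ℝ) (hΓ : Γ.PosDef)
    (l : ℝ) (hl : 0 < l) (y : Fin m → ℝ)
    (M : Matrix (Fin m) (Fin m) ℝ) (hM : M = G * S * Gᵀ)
    (zl : Fin m → ℝ) (hzl : zl = (M + l • Γ)⁻¹ *ᵥ y) :
    (∀ z : Fin m → ℝ,
      M *ᵥ (Γ⁻¹ *ᵥ (M *ᵥ z - y)) + l • (M *ᵥ z) = 0 → M *ᵥ (z - zl) = 0) ∧
    (∀ p : Fin m → ℝ, M *ᵥ p = 0 →
      M *ᵥ (Γ⁻¹ *ᵥ (M *ᵥ (zl + p) - y)) + l • (M *ᵥ (zl + p)) = 0) := by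
  have hMps : M.PosSemidef := by
    rw [hM]
    have := hS.posSemidef.mul_mul_conjTranspose_same G
    simpa using this
  have hMsymm : Mᵀ = M := by
    have := hMps.isHermitian.eq
    simpa using this
  have hlΓ : (l • Γ).PosDef := by
    refine Matrix.PosDef.of_dotProduct_mulVec_pos ?_ (fun x hx => ?_)
    · have hΓt : Γᵀ = Γ := by simpa using hΓ.1.eq
      unfold Matrix.IsHermitian
      rw [conjTranspose_smul]
      simp [hΓt]
    · rw [smul_mulVec, dotProduct_smul]
      simpa using mul_pos hl (hΓ.dotProduct_mulVec_pos hx)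
  have hPD : (M + l • Γ).PosDef := Matrix.PosDef.posSemidef_add hMps hlΓ
  have hy : (M + l • Γ) *ᵥ zl = y := by
    rw [hzl, mulVec_mulVec, Matrix.mul_nonsing_inv _ hPD.det_pos.ne'.isUnit, one_mulVec]
  have hΓinv : Γ⁻¹ *ᵥ (Γ *ᵥ zl) = zl := by
    rw [mulVec_mulVec, Matrix.nonsing_inv_mul _ hΓ.det_pos.ne'.isUnit, one_mulVec]
  have hstat : M *ᵥ (Γ⁻¹ *ᵥ (M *ᵥ zl - y)) + l • (M *ᵥ zl) = 0 := by
    have hres : M *ᵥ zl - y = -(l • (Γ *ᵥ zl)) := by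
      rw [← hy, add_mulVec, smul_mulVec]
      abel
    rw [hres]
    rw [mulVec_neg, mulVec_smul, hΓinv, mulVec_neg, mulVec_smul]
    abel
  constructor
  · intro z hz
    set w := z - zl with hw
    have key : M *ᵥ (Γ⁻¹ *ᵥ (M *ᵥ w)) + l • (M *ᵥ w) = 0 := by
      have h0 := congrArg₂ (· - ·) hz hstat
      simp only [sub_zero] at h0
      rw [← h0, hw]
      simp only [mulVec_sub, smul_sub]
      abel
    have hdot := congrArg (fun v => w ⬝ᵥ v) key
    simp only [dotProduct_add, dotProduct_smul, dotProduct_zero, smul_eq_mul] at hdot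
    have hterm1 : w ⬝ᵥ (M *ᵥ (Γ⁻¹ *ᵥ (M *ᵥ w))) = (M *ᵥ w) ⬝ᵥ (Γ⁻¹ *ᵥ (M *ᵥ w)) := by
      rw [dotProduct_mulVec]
      congr 1
      rw [← hMsymm, vecMul_transpose, hMsymm]
    by_contra hne
    have hpos : 0 < (M *ᵥ w) ⬝ᵥ (Γ⁻¹ *ᵥ (M *ᵥ w)) := by
      have := hΓ.inv.dotProduct_mulVec_pos hne
      simpa using this
    have hnn : 0 ≤ w ⬝ᵥ (M *ᵥ w) := by
      have := hMps.dotProduct_mulVec_nonneg w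
      simpa using this
    have : 0 < w ⬝ᵥ (M *ᵥ (Γ⁻¹ *ᵥ (M *ᵥ w))) + l * (w ⬝ᵥ (M *ᵥ w)) := by
      rw [hterm1]
      exact add_pos_of_pos_of_nonneg hpos (mul_nonneg hl.le hnn)
    linarith [hdot, this]
  · intro p hp
    have hMzp : M *ᵥ (zl + p) = M *ᵥ zl := by
      rw [mulVec_add, hp, add_zero]
    rw [hMzp]
    exact hstat
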